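/- (Composition–Diamond lemma for associative algebras; the case Ω = ∅.) Let K be a commutative ring with unit, X a well-ordered set, and order the free semigroup S(X) by the deg-lex ordering (compare words first by length, then lexicographically). Let K⟨X⟩ be the free K-module with basis S(X) with concatenation product (the free nonunital associative K-algebra on X), and let S ⊆ K⟨X⟩ be a set of monic polynomials. Then the following are equivalent: (I) S is a Gröbner–Shirshov basis, i.e., every intersection composition (f,g)_w = fa − bg (where w = f̄a = bḡ with |w| < |f̄| + |ḡ|) and every inclusion composition (f,g)_w = f − aḡb replaced by f − agb (where w = f̄ = aḡb for words a, b possibly empty) can be written as Σᵢ αᵢ aᵢsᵢbᵢ with sᵢ ∈ S and aᵢs̄ᵢbᵢ < w; (II) for every nonzero f in the two-sided ideal Id(S) generated by S, the leading word f̄ contains some s̄ (s ∈ S) as a subword; (III) the set Irr(S) of words in S(X) containing no s̄ (s ∈ S) as a subword is a K-basis of K⟨X⟩/Id(S). -/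

import Mathlib

/-! The Composition–Diamond lemma for associative algebras: the case `Ω = ∅`.
`K⟨X⟩` is the free nonunital associative `K`-algebra with `K`-basis the free
semigroup `S(X)`, realized as `MonoidAlgebra K (FreeSemigroup X)`. -/

universe u w

variable {X : Type u}

/-- The list of letters of a word of the free semigroup `S(X)`. -/
def FreeSemigroup.toL (u : FreeSemigroup X) : List X := u.head :: u.tail

/-- The length `|u|` of a word. -/
def FreeSemigroup.len (u : FreeSemigroup X) : ℕ := u.toL.length

/-- The deg-lex ordering on `S(X)`: compare two words first by their lengths and then
lexicographically. `DegLexW u v` means `u < v`. -/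
def DegLexW [LinearOrder X] (u v : FreeSemigroup X) : Prop :=
  u.len < v.len ∨ (u.len = v.len ∧ List.Lex (· < ·) u.toL v.toL)

/-- `a u b`: the word `u` multiplied by the possibly empty words `a` (on the left)
and `b` (on the right). -/
def wrapW (a b : List X) (u : FreeSemigroup X) : FreeSemigroup X :=
  match a with
  | [] => ⟨u.head, u.tail ++ b⟩
  | x :: xs => ⟨x, xs ++ u.toL ++ b⟩

section Algebra

variable (K : Type w) [CommRing K]

/-- The free nonunital associative `K`-algebra `K⟨X⟩` on `X`. -/
abbrev FreeNA (X : Type u) := MonoidAlgebra K (FreeSemigroup X)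

variable {K}

/-- `a g b` for a polynomial `g ∈ K⟨X⟩` and possibly empty words `a, b ∈ X*`. -/
noncomputable def wrapPoly (a b : List X) (g : FreeNA K X) : FreeNA K X :=
  g.coeff.sum fun w c => MonoidAlgebra.single (wrapW a b w) c

variable [LinearOrder X]

/-- `w` is the leading word `f̄` of `f` under the deg-lex ordering. -/
def HasLead (f : FreeNA K X) (w : FreeSemigroup X) : Prop :=
  w ∈ f.coeff.support ∧ ∀ v ∈ f.coeff.support, v ≠ w → DegLexW v w

/-- `f` is monic with leading word `w`. -/
def MonicAt (f : FreeNA K X) (w : FreeSemigroup X) : Prop :=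
  HasLead f w ∧ f.coeff w = 1

/-- The two-sided ideal `Id(S)` generated by `S` in `K⟨X⟩`: the `K`-span of all
`a s b` with `s ∈ S` and `a, b` possibly empty words. -/
noncomputable def IdS (S : Set (FreeNA K X)) : Submodule K (FreeNA K X) :=
  Submodule.span K {q | ∃ a b s, s ∈ S ∧ q = wrapPoly a b s}

/-- `p ≡ 0 mod (S, w)`: `p = Σᵢ αᵢ aᵢ sᵢ bᵢ` with `sᵢ ∈ S` and `aᵢ s̄ᵢ bᵢ < w`. -/
def TrivialMod (S : Set (FreeNA K X)) (w : FreeSemigroup X) (p : FreeNA K X) : Prop :=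
  p ∈ Submodule.span K
    {q | ∃ a b s ws, s ∈ S ∧ HasLead s ws ∧ DegLexW (wrapW a b ws) w ∧ q = wrapPoly a b s}

/-- `S` is a Gröbner–Shirshov basis in `K⟨X⟩`: `S` consists of monic polynomials and
every intersection composition `(f,g)_w = fa - bg` (where `w = f̄a = bḡ` with
`|w| < |f̄| + |ḡ|`) and every inclusion composition `(f,g)_w = f - agb` (where
`w = f̄ = aḡb`, `a, b` possibly empty) is trivial modulo `(S, w)`. -/
def IsGSB (S : Set (FreeNA K X)) : Prop :=
  (∀ s ∈ S, ∃ w, MonicAt s w) ∧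
  (∀ f ∈ S, ∀ g ∈ S, ∀ wf wg a b : FreeSemigroup X,
    HasLead f wf → HasLead g wg → wf * a = b * wg →
    (wf * a).len < wf.len + wg.len →
    TrivialMod S (wf * a) (f * MonoidAlgebra.single a 1 - MonoidAlgebra.single b 1 * g)) ∧
  (∀ f ∈ S, ∀ g ∈ S, ∀ wf wg : FreeSemigroup X, ∀ a b : List X,
    HasLead f wf → HasLead g wg → wf = wrapW a b wg →
    TrivialMod S wf (f - wrapPoly a b g))

/-- Condition (II): the leading word of every nonzero `f ∈ Id(S)` contains some `s̄`
(`s ∈ S`) as a subword. -/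
def CDTwo (S : Set (FreeNA K X)) : Prop :=
  ∀ f : FreeNA K X, f ∈ IdS S → f ≠ 0 →
    ∃ (a b : List X) (s : FreeNA K X) (ws : FreeSemigroup X),
      s ∈ S ∧ HasLead s ws ∧ HasLead f (wrapW a b ws)

/-- `Irr(S)`: the words of `S(X)` containing no `s̄` (`s ∈ S`) as a subword. -/
def IrrSet (S : Set (FreeNA K X)) : Set (FreeSemigroup X) :=
  {w | ¬ ∃ a b s ws, s ∈ S ∧ HasLead s ws ∧ w = wrapW a b ws}

/-- Condition (III): the images of the elements of `Irr(S)` form a `K`-basis of the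
quotient `K⟨X⟩ / Id(S)`. -/
def CDThree (S : Set (FreeNA K X)) : Prop :=
  LinearIndependent K (fun w : IrrSet S =>
    (Submodule.Quotient.mk (MonoidAlgebra.single w.1 (1 : K)) : FreeNA K X ⧸ IdS S)) ∧
  Submodule.span K (Set.range (fun w : IrrSet S =>
    (Submodule.Quotient.mk (MonoidAlgebra.single w.1 (1 : K)) : FreeNA K X ⧸ IdS S))) = ⊤

/-! ### Auxiliary development -/

section Words

instance {R G : Type*} [Semiring R] : CoeFun (MonoidAlgebra R G) (fun _ => G → R) :=
  ⟨fun f => f.coeff⟩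

variable {Y : Type u}

lemma FreeSemigroup.toL_ne_nil (u : FreeSemigroup Y) : u.toL ≠ [] := by
  simp [FreeSemigroup.toL]

lemma FreeSemigroup.toL_injective : Function.Injective (FreeSemigroup.toL (X := Y)) := by
  rintro ⟨h, t⟩ ⟨h', t'⟩ e
  simp only [FreeSemigroup.toL, List.cons.injEq] at e
  simp [e.1, e.2]

lemma FreeSemigroup.toL_mul (u v : FreeSemigroup Y) : (u * v).toL = u.toL ++ v.toL := rfl

lemma toL_wrapW (a b : List Y) (u : FreeSemigroup Y) :
    (wrapW a b u).toL = a ++ u.toL ++ b := by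
  cases a with
  | nil => simp [wrapW, FreeSemigroup.toL]
  | cons x xs => simp [wrapW, FreeSemigroup.toL]

lemma wrapW_injective (a b : List Y) : Function.Injective (wrapW (X := Y) a b) := by
  intro u v h
  apply FreeSemigroup.toL_injective
  have := congrArg FreeSemigroup.toL h
  rw [toL_wrapW, toL_wrapW] at this
  exact List.append_cancel_left (List.append_cancel_right this)

lemma wrapW_wrapW (a b a' b' : List Y) (u : FreeSemigroup Y) :
    wrapW a b (wrapW a' b' u) = wrapW (a ++ a') (b' ++ b) u := by
  apply FreeSemigroup.toL_injective
  simp [toL_wrapW]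

lemma wrapW_nil_nil (u : FreeSemigroup Y) : wrapW [] [] u = u := by
  apply FreeSemigroup.toL_injective
  simp [toL_wrapW]

lemma len_wrapW (a b : List Y) (u : FreeSemigroup Y) :
    (wrapW a b u).len = a.length + u.len + b.length := by
  simp [FreeSemigroup.len, toL_wrapW]; omega

end Words

section Orders

variable [LinearOrder X]

/-- Embedding of `S(X)` into `ℕ ×ₗ List X` realizing the deg-lex order. -/
def dlEmb (u : FreeSemigroup X) : ℕ ×ₗ List X := toLex (u.len, u.toL)

lemma dlEmb_injective : Function.Injective (dlEmb (X := X)) := by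
  intro u v h
  apply FreeSemigroup.toL_injective
  exact congrArg (fun p => (ofLex p).2) h

noncomputable instance : LinearOrder (FreeSemigroup X) :=
  LinearOrder.lift' dlEmb dlEmb_injective

lemma FreeSemigroup.lt_iff_dlEmb (u v : FreeSemigroup X) : u < v ↔ dlEmb u < dlEmb v := by
  rw [lt_iff_le_not_ge, lt_iff_le_not_ge]; exact Iff.rfl

lemma degLex_iff_lt (u v : FreeSemigroup X) : DegLexW u v ↔ u < v := by
  rw [FreeSemigroup.lt_iff_dlEmb, dlEmb, dlEmb, Prod.Lex.lt_iff]
  exact Iff.rfl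

/-- `Lex` restricted to lists of a fixed length `n`. -/
def LexLen (n : ℕ) (l1 l2 : List X) : Prop :=
  l1.length = n ∧ l2.length = n ∧ List.Lex (· < ·) l1 l2

lemma lexLen_wf [WellFoundedLT X] : ∀ n, WellFounded (LexLen (X := X) n) := by
  intro n
  induction n with
  | zero =>
    constructor; intro l; constructor
    rintro y ⟨-, hl, hlex⟩
    rw [List.length_eq_zero_iff] at hl; subst hl; cases hlex
  | succ n ih =>
    have hwf : WellFounded (Prod.Lex ((· < ·) : WithBot X → WithBot X → Prop) (LexLen n)) :=
      WellFounded.prod_lex wellFounded_lt ih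
    have : WellFounded (InvImage (Prod.Lex ((· < ·) : WithBot X → WithBot X → Prop) (LexLen n))
        (fun l : List X => ((l.head? : WithBot X), l.tail))) := InvImage.wf _ hwf
    refine Subrelation.wf ?_ this
    rintro l1 l2 ⟨h1, h2, hlex⟩
    match l1, l2, hlex with
    | _, _, List.Lex.rel h => exact Prod.Lex.left _ _ (by exact WithBot.coe_lt_coe.mpr h)
    | _ :: t1, _ :: t2, List.Lex.cons h =>
      exact Prod.Lex.right _ ⟨by simpa using h1, by simpa using h2, h⟩

lemma degLex_wf [WellFoundedLT X] : WellFounded (DegLexW (X := X)) := by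
  have main : ∀ n (u : FreeSemigroup X), u.len = n → Acc DegLexW u := by
    intro n
    induction n using Nat.strong_induction_on with
    | _ n IH =>
      have inner : ∀ l : List X, l.length = n →
          ∀ u : FreeSemigroup X, u.toL = l → Acc DegLexW u := fun l =>
        (lexLen_wf (X := X) n).induction
          (C := fun l => l.length = n → ∀ u : FreeSemigroup X, u.toL = l → Acc DegLexW u) l
          (by
            intro l IH2 hl u hu
            have hun : u.len = n := by rw [FreeSemigroup.len, hu, hl]
            constructor
            intro v hv
            rcases hv with h | ⟨h1, h2⟩
            · exact IH v.len (hun ▸ h) v rfl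
            · exact IH2 v.toL ⟨h1.trans hun, hl, hu ▸ h2⟩ (h1.trans hun) v rfl)
      exact fun u hu => inner u.toL (hu ▸ rfl) u rfl
  exact ⟨fun u => main u.len u rfl⟩

lemma lt_wf [WellFoundedLT X] : WellFounded ((· < ·) : FreeSemigroup X → FreeSemigroup X → Prop) :=
  Subrelation.wf (fun h => (degLex_iff_lt _ _).mpr h) degLex_wf

lemma lt_wrapW_mono {u v : FreeSemigroup X} (a b : List X) (h : u < v) :
    wrapW a b u < wrapW a b v := by
  rw [← degLex_iff_lt] at h ⊢
  rcases h with h | ⟨h1, h2⟩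
  · left; simp only [len_wrapW]; omega
  · right
    refine ⟨by simp [len_wrapW, h1], ?_⟩
    rw [toL_wrapW, toL_wrapW]
    have key : ∀ (l1 l2 q : List X), l1.length = l2.length →
        List.Lex (· < ·) l1 l2 → List.Lex (· < ·) (l1 ++ q) (l2 ++ q) := by
      intro l1 l2 q hlen hlex
      induction hlex with
      | nil => simp at hlen
      | cons h ih => exact List.Lex.cons (ih (by simpa using hlen))
      | rel h => exact List.Lex.rel h
    have hlen : u.toL.length = v.toL.length := h1
    have := key _ _ b (by simp [hlen]) (List.Lex.append_left _ h2 a)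
    simpa [List.append_assoc] using this

end Orders

section Leads

variable [LinearOrder X]

lemma le_wrapW_mono {u v : FreeSemigroup X} (a b : List X) (h : u ≤ v) :
    wrapW a b u ≤ wrapW a b v := by
  rcases eq_or_lt_of_le h with rfl | h
  · exact le_rfl
  · exact le_of_lt (lt_wrapW_mono a b h)

lemma wrapPoly_def (a b : List X) (g : FreeNA K X) :
    wrapPoly a b g = MonoidAlgebra.mapDomain (wrapW a b) g := by
  apply MonoidAlgebra.ext
  simp [wrapPoly, MonoidAlgebra.coeff_finsuppSum, Finsupp.mapDomain]

lemma wrapPoly_linear (a b : List X) (g : FreeNA K X) :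
    wrapPoly a b g = MonoidAlgebra.mapDomainLinearMap K K (wrapW a b) g := by
  rw [wrapPoly_def]; rfl

lemma wrapPoly_add (a b : List X) (g h : FreeNA K X) :
    wrapPoly a b (g + h) = wrapPoly a b g + wrapPoly a b h :=
  by simp only [wrapPoly_linear]; exact map_add (MonoidAlgebra.mapDomainLinearMap K K (wrapW a b)) g h

lemma wrapPoly_sub (a b : List X) (g h : FreeNA K X) :
    wrapPoly a b (g - h) = wrapPoly a b g - wrapPoly a b h :=
  by simp only [wrapPoly_linear]; exact map_sub (MonoidAlgebra.mapDomainLinearMap K K (wrapW a b)) g h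

lemma wrapPoly_smul (a b : List X) (c : K) (g : FreeNA K X) :
    wrapPoly a b (c • g) = c • wrapPoly a b g :=
  by simp only [wrapPoly_linear]; exact map_smul (MonoidAlgebra.mapDomainLinearMap K K (wrapW a b)) c g

lemma wrapPoly_zero (a b : List X) : wrapPoly a b (0 : FreeNA K X) = 0 :=
  map_zero (MonoidAlgebra.mapDomainLinearMap K K (wrapW a b))

lemma wrapPoly_single (a b : List X) (u : FreeSemigroup X) (c : K) :
    wrapPoly a b (MonoidAlgebra.single u c) = MonoidAlgebra.single (wrapW a b u) c := by
  rw [wrapPoly_def]; exact MonoidAlgebra.mapDomain_single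

lemma wrapPoly_apply_wrap (a b : List X) (g : FreeNA K X) (u : FreeSemigroup X) :
    (wrapPoly a b g) (wrapW a b u) = g u := by
  rw [wrapPoly_def, MonoidAlgebra.coeff_mapDomain, Finsupp.mapDomain_apply (wrapW_injective a b)]

lemma wrapPoly_wrapPoly (a b a' b' : List X) (g : FreeNA K X) :
    wrapPoly a b (wrapPoly a' b' g) = wrapPoly (a ++ a') (b' ++ b) g := by
  rw [wrapPoly_def, wrapPoly_def, wrapPoly_def]
  apply MonoidAlgebra.ext
  simp only [MonoidAlgebra.coeff_mapDomain, ← Finsupp.mapDomain_comp]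
  congr 1
  funext u
  exact wrapW_wrapW a b a' b' u

lemma wrapPoly_nil_nil (g : FreeNA K X) : wrapPoly [] [] g = g := by
  rw [wrapPoly_def]
  have : wrapW (X := X) [] [] = id := funext wrapW_nil_nil
  rw [this]
  apply MonoidAlgebra.ext
  simp only [MonoidAlgebra.coeff_mapDomain, Finsupp.mapDomain_id]

lemma mem_support_wrapPoly {a b : List X} {g : FreeNA K X} {v : FreeSemigroup X}
    (hv : v ∈ (wrapPoly a b g).coeff.support) : ∃ u ∈ g.coeff.support, v = wrapW a b u := by
  classical
  rw [wrapPoly_def, MonoidAlgebra.coeff_mapDomain] at hv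
  obtain ⟨u, hu, rfl⟩ := Finset.mem_image.mp (Finsupp.mapDomain_support hv)
  exact ⟨u, hu, rfl⟩

lemma hasLead_iff {f : FreeNA K X} {w : FreeSemigroup X} :
    HasLead f w ↔ w ∈ f.coeff.support ∧ ∀ v ∈ f.coeff.support, v ≤ w := by
  unfold HasLead
  refine and_congr_right fun hw => ⟨fun h v hv => ?_, fun h v hv hne => ?_⟩
  · rcases eq_or_ne v w with rfl | hne
    · exact le_rfl
    · exact le_of_lt ((degLex_iff_lt _ _).mp (h v hv hne))
  · exact (degLex_iff_lt _ _).mpr (lt_of_le_of_ne (h v hv) hne)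

lemma exists_hasLead {f : FreeNA K X} (hf : f ≠ 0) : ∃ w, HasLead f w := by
  have hs : f.coeff.support.Nonempty := Finsupp.support_nonempty_iff.mpr (fun h => hf (MonoidAlgebra.coeff_eq_zero.mp h))
  exact ⟨f.coeff.support.max' hs,
    hasLead_iff.mpr ⟨Finset.max'_mem _ _, fun v hv => Finset.le_max' _ v hv⟩⟩

lemma hasLead_unique {f : FreeNA K X} {w w' : FreeSemigroup X}
    (h : HasLead f w) (h' : HasLead f w') : w = w' := by
  rw [hasLead_iff] at h h'
  exact le_antisymm (h'.2 w h.1) (h.2 w' h'.1)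

lemma hasLead_coeff_ne {f : FreeNA K X} {w : FreeSemigroup X} (h : HasLead f w) : f w ≠ 0 :=
  Finsupp.mem_support_iff.mp h.1

lemma hasLead_ne_zero {f : FreeNA K X} {w : FreeSemigroup X} (h : HasLead f w) : f ≠ 0 := by
  intro hf; exact hasLead_coeff_ne h (by simp [hf])

lemma coeff_lead_eq_one {S : Set (FreeNA K X)} (hmonic : ∀ s ∈ S, ∃ w, MonicAt s w)
    {s : FreeNA K X} {w : FreeSemigroup X} (hs : s ∈ S) (h : HasLead s w) : s w = 1 := by
  obtain ⟨w', hm⟩ := hmonic s hs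
  rw [hasLead_unique h hm.1]
  exact hm.2

lemma hasLead_wrapPoly {g : FreeNA K X} {w : FreeSemigroup X} (a b : List X)
    (h : HasLead g w) : HasLead (wrapPoly a b g) (wrapW a b w) := by
  rw [hasLead_iff] at h ⊢
  constructor
  · rw [Finsupp.mem_support_iff, wrapPoly_apply_wrap]
    exact Finsupp.mem_support_iff.mp h.1
  · intro v hv
    obtain ⟨u, hu, rfl⟩ := mem_support_wrapPoly hv
    exact le_wrapW_mono a b (h.2 u hu)

lemma support_lt_of_hasLead_sub_single {f : FreeNA K X} {w : FreeSemigroup X}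
    (h : HasLead f w) (hm : f w = 1) :
    ∀ v ∈ (f - MonoidAlgebra.single w 1).coeff.support, v < w := by
  intro v hv
  rw [Finsupp.mem_support_iff] at hv
  have hvne : v ≠ w := by
    intro rfl'
    subst rfl'
    apply hv
    rw [MonoidAlgebra.coeff_sub, Finsupp.sub_apply, hm]
    simp [MonoidAlgebra.coeff_single]
  have hvf : v ∈ f.coeff.support := by
    rw [Finsupp.mem_support_iff]
    intro h0
    apply hv
    rw [MonoidAlgebra.coeff_sub, Finsupp.sub_apply, h0]
    simp [MonoidAlgebra.coeff_single, Finsupp.single_eq_of_ne hvne]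
  exact (degLex_iff_lt _ _).mp (h.2 v hvf hvne)

/-- `≤ u` bound on support is preserved by sums etc.: helper notion. -/
def SuppLE (f : FreeNA K X) (u : FreeSemigroup X) : Prop := ∀ v ∈ f.coeff.support, v ≤ u

def SuppLT (f : FreeNA K X) (u : FreeSemigroup X) : Prop := ∀ v ∈ f.coeff.support, v < u

lemma suppLT_wrapPoly {g : FreeNA K X} {w : FreeSemigroup X} (a b : List X)
    (h : SuppLT g w) : SuppLT (wrapPoly a b g) (wrapW a b w) := by
  intro v hv
  obtain ⟨u, hu, rfl⟩ := mem_support_wrapPoly hv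
  exact lt_wrapW_mono a b (h u hu)

lemma suppLT_add {f g : FreeNA K X} {u : FreeSemigroup X} (hf : SuppLT f u) (hg : SuppLT g u) :
    SuppLT (f + g) u := by
  intro v hv
  have := Finsupp.support_add hv
  rcases Finset.mem_union.mp this with h | h
  · exact hf v h
  · exact hg v h

lemma suppLT_neg {f : FreeNA K X} {u : FreeSemigroup X} (hf : SuppLT f u) : SuppLT (-f) u := by
  intro v hv
  rw [MonoidAlgebra.coeff_neg, Finsupp.support_neg] at hv
  exact hf v hv

lemma suppLT_sub {f g : FreeNA K X} {u : FreeSemigroup X} (hf : SuppLT f u) (hg : SuppLT g u) :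
    SuppLT (f - g) u := by
  rw [sub_eq_add_neg]
  exact suppLT_add hf (suppLT_neg hg)

lemma suppLT_smul {f : FreeNA K X} {u : FreeSemigroup X} (c : K) (hf : SuppLT f u) :
    SuppLT (c • f) u := by
  intro v hv
  exact hf v (Finsupp.support_smul hv)

lemma suppLT_zero {u : FreeSemigroup X} : SuppLT (0 : FreeNA K X) u := by
  intro v hv; simp at hv

lemma hasLead_of_suppLT {f g : FreeNA K X} {w : FreeSemigroup X}
    (hf : HasLead f w) (hg : SuppLT g w) : HasLead (f + g) w := by
  have hco : (f + g) w = f w := by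
    rw [MonoidAlgebra.coeff_add, Finsupp.add_apply]
    have : g w = 0 := by
      by_contra h0
      exact absurd (hg w (Finsupp.mem_support_iff.mpr h0)) (lt_irrefl w)
    rw [this, add_zero]
  rw [hasLead_iff] at hf ⊢
  constructor
  · rw [Finsupp.mem_support_iff, hco]
    exact Finsupp.mem_support_iff.mp hf.1
  · intro v hv
    rcases Finset.mem_union.mp (Finsupp.support_add hv) with h | h
    · exact hf.2 v h
    · exact le_of_lt (hg v h)

end Leads

section TrivialModLemmas

variable [LinearOrder X]

lemma trivialMod_gen {S : Set (FreeNA K X)} {w : FreeSemigroup X} {a b : List X}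
    {s : FreeNA K X} {ws : FreeSemigroup X} (hs : s ∈ S) (hl : HasLead s ws)
    (hlt : wrapW a b ws < w) : TrivialMod S w (wrapPoly a b s) :=
  Submodule.subset_span ⟨a, b, s, ws, hs, hl, (degLex_iff_lt _ _).mpr hlt, rfl⟩

lemma trivialMod_mono {S : Set (FreeNA K X)} {w w' : FreeSemigroup X} {p : FreeNA K X}
    (hw : w ≤ w') (h : TrivialMod S w p) : TrivialMod S w' p := by
  refine Submodule.span_mono ?_ h
  rintro q ⟨a, b, s, ws, hs, hl, hlt, rfl⟩
  exact ⟨a, b, s, ws, hs, hl,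
    (degLex_iff_lt _ _).mpr (lt_of_lt_of_le ((degLex_iff_lt _ _).mp hlt) hw), rfl⟩

lemma trivialMod_wrap {S : Set (FreeNA K X)} {w : FreeSemigroup X} {p : FreeNA K X}
    (a b : List X) (h : TrivialMod S w p) :
    TrivialMod S (wrapW a b w) (wrapPoly a b p) := by
  rw [wrapPoly_linear]
  have := Submodule.mem_map_of_mem (f := MonoidAlgebra.mapDomainLinearMap K K (wrapW a b)) h
  rw [Submodule.map_span] at this
  refine Submodule.span_mono ?_ this
  rintro q ⟨q', ⟨a', b', s, ws, hs, hl, hlt, rfl⟩, rfl⟩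
  refine ⟨a ++ a', b' ++ b, s, ws, hs, hl, ?_, ?_⟩
  · rw [← wrapW_wrapW]
    exact (degLex_iff_lt _ _).mpr (lt_wrapW_mono a b ((degLex_iff_lt _ _).mp hlt))
  · rw [← wrapPoly_linear]
    exact wrapPoly_wrapPoly a b a' b' s

lemma trivialMod_mem_idS {S : Set (FreeNA K X)} {w : FreeSemigroup X} {p : FreeNA K X}
    (h : TrivialMod S w p) : p ∈ IdS S := by
  refine Submodule.span_mono ?_ h
  rintro q ⟨a, b, s, ws, hs, hl, hlt, rfl⟩
  exact ⟨a, b, s, hs, rfl⟩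

lemma wrapPoly_mem_idS {S : Set (FreeNA K X)} {s : FreeNA K X} (a b : List X) (hs : s ∈ S) :
    wrapPoly a b s ∈ IdS S :=
  Submodule.subset_span ⟨a, b, s, hs, rfl⟩

lemma wrapW_nil_toL (u v : FreeSemigroup X) : wrapW [] u.toL v = v * u := by
  apply FreeSemigroup.toL_injective
  simp [toL_wrapW, FreeSemigroup.toL_mul]

lemma wrapW_toL_nil (u v : FreeSemigroup X) : wrapW u.toL [] v = u * v := by
  apply FreeSemigroup.toL_injective
  simp [toL_wrapW, FreeSemigroup.toL_mul]

lemma mul_single_eq_wrapPoly (f : FreeNA K X) (u : FreeSemigroup X) :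
    f * MonoidAlgebra.single u (1 : K) = wrapPoly [] u.toL f := by
  induction f using MonoidAlgebra.induction_linear with
  | zero => rw [zero_mul, wrapPoly_zero]
  | add f g hf hg => rw [add_mul, hf, hg, wrapPoly_add]
  | single v c =>
    rw [MonoidAlgebra.single_mul_single, wrapPoly_single, mul_one, wrapW_nil_toL]

lemma single_mul_eq_wrapPoly (g : FreeNA K X) (u : FreeSemigroup X) :
    MonoidAlgebra.single u (1 : K) * g = wrapPoly u.toL [] g := by
  induction g using MonoidAlgebra.induction_linear with
  | zero => rw [mul_zero, wrapPoly_zero]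
  | add f g hf hg => rw [mul_add, hf, hg, wrapPoly_add]
  | single v c =>
    rw [MonoidAlgebra.single_mul_single, wrapPoly_single, one_mul, wrapW_toL_nil]

lemma suppLT_sub_coeff_single {h : FreeNA K X} {w0 : FreeSemigroup X} (hlead : HasLead h w0) :
    SuppLT (h - MonoidAlgebra.single w0 (h w0)) w0 := by
  intro v hv
  rw [Finsupp.mem_support_iff] at hv
  have hvne : v ≠ w0 := by
    intro rfl'
    subst rfl'
    apply hv
    rw [MonoidAlgebra.coeff_sub, Finsupp.sub_apply,
      show (MonoidAlgebra.single v (h v) : FreeNA K X) v = h v from Finsupp.single_eq_same]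
    exact sub_self _
  have hvf : v ∈ h.coeff.support := by
    rw [Finsupp.mem_support_iff]
    intro h0
    apply hv
    rw [MonoidAlgebra.coeff_sub, Finsupp.sub_apply, h0, MonoidAlgebra.coeff_single, Finsupp.single_eq_of_ne hvne]
    simp
  exact (degLex_iff_lt _ _).mp (hlead.2 v hvf hvne)

/-- The key consequence of (II): any element of `Id(S)` whose support lies strictly
below `w` is trivial modulo `(S, w)`. -/
lemma trivialMod_of_cdTwo [WellFoundedLT X] {S : Set (FreeNA K X)}
    (hmonic : ∀ s ∈ S, ∃ w, MonicAt s w) (h2 : CDTwo S) {w : FreeSemigroup X} :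
    ∀ u : FreeSemigroup X, ∀ h : FreeNA K X, h ∈ IdS S → SuppLT h w → SuppLE h u →
      TrivialMod S w h := by
  intro u
  induction u using (lt_wf (X := X)).induction with
  | _ u IH =>
    intro h hmem hltw hleu
    by_cases hh : h = 0
    · subst hh; exact Submodule.zero_mem _
    obtain ⟨a, b, s, ws, hs, hws, hfl⟩ := h2 h hmem hh
    set w0 := wrapW a b ws with hw0
    have hmon_s : s ws = 1 := coeff_lead_eq_one hmonic hs hws
    set c := h w0 with hc
    set h' := h - c • wrapPoly a b s with hh'
    have hw0w : w0 < w := hltw w0 hfl.1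
    have gen_triv : TrivialMod S w (wrapPoly a b s) := trivialMod_gen hs hws hw0w
    have h'mem : h' ∈ IdS S :=
      Submodule.sub_mem _ hmem (Submodule.smul_mem _ _ (wrapPoly_mem_idS a b hs))
    have hWlead : HasLead (wrapPoly a b s) w0 := hasLead_wrapPoly a b hws
    have hWcoeff : (wrapPoly a b s) w0 = 1 := by
      rw [hw0, wrapPoly_apply_wrap]; exact hmon_s
    have h'suppLT : SuppLT h' w0 := by
      have e : h' = (h - MonoidAlgebra.single w0 (h w0)) -
          c • (wrapPoly a b s - MonoidAlgebra.single w0 1) := by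
        rw [hh', smul_sub, hc]
        have : c • (MonoidAlgebra.single w0 (1 : K)) = MonoidAlgebra.single w0 c := by
          rw [MonoidAlgebra.smul_single', mul_one]
        rw [hc] at this
        rw [this]
        abel
      rw [e]
      exact suppLT_sub (suppLT_sub_coeff_single hfl)
        (suppLT_smul c (support_lt_of_hasLead_sub_single hWlead hWcoeff))
    have hback : h = h' + c • wrapPoly a b s := by rw [hh']; abel
    by_cases hh0 : h' = 0
    · rw [hback, hh0, zero_add]
      exact Submodule.smul_mem _ _ gen_triv
    · obtain ⟨u', hu'⟩ := exists_hasLead hh0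
      have hu'lt : u' < u := lt_of_lt_of_le (h'suppLT u' hu'.1) (hleu w0 hfl.1)
      have h'triv : TrivialMod S w h' := by
        refine IH u' hu'lt h' h'mem (fun v hv => lt_trans (h'suppLT v hv) hw0w) ?_
        rw [hasLead_iff] at hu'
        exact hu'.2
      rw [hback]
      exact Submodule.add_mem _ h'triv (Submodule.smul_mem _ _ gen_triv)

lemma cdTwo_implies_isGSB [WellFoundedLT X] {S : Set (FreeNA K X)}
    (hmonic : ∀ s ∈ S, ∃ w, MonicAt s w) (h2 : CDTwo S) : IsGSB S := by
  refine ⟨hmonic, ?_, ?_⟩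
  · intro f hf g hg wf wg a b hwf hwg heq _hlen
    set h := f * MonoidAlgebra.single a 1 - MonoidAlgebra.single b 1 * g with hdef
    have e1 : f * MonoidAlgebra.single a (1 : K) = wrapPoly [] a.toL f :=
      mul_single_eq_wrapPoly f a
    have e2 : MonoidAlgebra.single b (1 : K) * g = wrapPoly b.toL [] g :=
      single_mul_eq_wrapPoly g b
    have hmem : h ∈ IdS S := by
      rw [hdef, e1, e2]
      exact Submodule.sub_mem _ (wrapPoly_mem_idS _ _ hf) (wrapPoly_mem_idS _ _ hg)
    have hl1 : HasLead (wrapPoly [] a.toL f) (wf * a) := by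
      rw [← wrapW_nil_toL a wf]; exact hasLead_wrapPoly _ _ hwf
    have hc1 : (wrapPoly [] a.toL f) (wf * a) = 1 := by
      rw [← wrapW_nil_toL a wf, wrapPoly_apply_wrap]
      exact coeff_lead_eq_one hmonic hf hwf
    have hl2 : HasLead (wrapPoly b.toL [] g) (wf * a) := by
      rw [heq, ← wrapW_toL_nil b wg]; exact hasLead_wrapPoly _ _ hwg
    have hc2 : (wrapPoly b.toL [] g) (wf * a) = 1 := by
      rw [heq, ← wrapW_toL_nil b wg, wrapPoly_apply_wrap]
      exact coeff_lead_eq_one hmonic hg hwg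
    have hsupp : SuppLT h (wf * a) := by
      have e : h = (wrapPoly [] a.toL f - MonoidAlgebra.single (wf * a) 1) -
          (wrapPoly b.toL [] g - MonoidAlgebra.single (wf * a) 1) := by
        rw [hdef, e1, e2]; abel
      rw [e]
      exact suppLT_sub (support_lt_of_hasLead_sub_single hl1 hc1)
        (support_lt_of_hasLead_sub_single hl2 hc2)
    exact trivialMod_of_cdTwo hmonic h2 (wf * a) h hmem hsupp
      (fun v hv => le_of_lt (hsupp v hv))
  · intro f hf g hg wf wg a b hwf hwg heq
    set h := f - wrapPoly a b g with hdef
    have hmem : h ∈ IdS S := by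
      rw [hdef]
      have : f = wrapPoly [] [] f := (wrapPoly_nil_nil f).symm
      rw [this]
      exact Submodule.sub_mem _ (wrapPoly_mem_idS _ _ hf) (wrapPoly_mem_idS _ _ hg)
    have hl2 : HasLead (wrapPoly a b g) wf := by
      rw [heq]; exact hasLead_wrapPoly _ _ hwg
    have hc2 : (wrapPoly a b g) wf = 1 := by
      rw [heq, wrapPoly_apply_wrap]
      exact coeff_lead_eq_one hmonic hg hwg
    have hc1 : f wf = 1 := coeff_lead_eq_one hmonic hf hwf
    have hsupp : SuppLT h wf := by
      have e : h = (f - MonoidAlgebra.single wf 1) -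
          (wrapPoly a b g - MonoidAlgebra.single wf 1) := by rw [hdef]; abel
      rw [e]
      exact suppLT_sub (support_lt_of_hasLead_sub_single hwf hc1)
        (support_lt_of_hasLead_sub_single hl2 hc2)
    exact trivialMod_of_cdTwo hmonic h2 wf h hmem hsupp (fun v hv => le_of_lt (hsupp v hv))

end TrivialModLemmas

section Basis

variable [LinearOrder X]

lemma mk_eq_sum (S : Set (FreeNA K X)) (p : FreeNA K X) :
    (Submodule.Quotient.mk p : FreeNA K X ⧸ IdS S) =
      ∑ v ∈ p.coeff.support, (p v) •
        (Submodule.Quotient.mk (MonoidAlgebra.single v (1 : K)) : FreeNA K X ⧸ IdS S) := by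
  have h1 : p = ∑ v ∈ p.coeff.support, MonoidAlgebra.single v (p v) := by
    conv_lhs => rw [← MonoidAlgebra.sum_coeff_single p]
    rfl
  conv_lhs => rw [h1]
  rw [← Submodule.mkQ_apply, map_sum]
  refine Finset.sum_congr rfl fun v hv => ?_
  rw [show MonoidAlgebra.single v (p v) = (p v) • MonoidAlgebra.single v (1 : K) by
    rw [MonoidAlgebra.smul_single', mul_one], map_smul, Submodule.mkQ_apply]

lemma span_irr_eq_top [WellFoundedLT X] {S : Set (FreeNA K X)}
    (hmonic : ∀ s ∈ S, ∃ w, MonicAt s w) :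
    Submodule.span K (Set.range (fun w : IrrSet S =>
      (Submodule.Quotient.mk (MonoidAlgebra.single w.1 (1 : K)) : FreeNA K X ⧸ IdS S))) = ⊤ := by
  set N := Submodule.span K (Set.range (fun w : IrrSet S =>
    (Submodule.Quotient.mk (MonoidAlgebra.single w.1 (1 : K)) : FreeNA K X ⧸ IdS S))) with hN
  have claim : ∀ u : FreeSemigroup X,
      (Submodule.Quotient.mk (MonoidAlgebra.single u (1 : K)) : FreeNA K X ⧸ IdS S) ∈ N := by
    intro u
    induction u using (lt_wf (X := X)).induction with
    | _ u IH =>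
      by_cases hirr : u ∈ IrrSet S
      · exact Submodule.subset_span ⟨⟨u, hirr⟩, rfl⟩
      · have hdec : ∃ a b s ws, s ∈ S ∧ HasLead s ws ∧ u = wrapW a b ws := by
          simpa [IrrSet, Set.mem_setOf_eq, not_not] using hirr
        obtain ⟨a, b, s, ws, hs, hl, hu⟩ := hdec
        have hW : HasLead (wrapPoly a b s) u := hu ▸ hasLead_wrapPoly a b hl
        have hWc : (wrapPoly a b s) u = 1 := by
          rw [hu, wrapPoly_apply_wrap]
          exact coeff_lead_eq_one hmonic hs hl
        set r := wrapPoly a b s - MonoidAlgebra.single u 1 with hr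
        have hrlt : SuppLT r u := support_lt_of_hasLead_sub_single hW hWc
        have he : MonoidAlgebra.single u (1 : K) = wrapPoly a b s - r := by rw [hr]; abel
        have hmkW : (Submodule.Quotient.mk (wrapPoly a b s) : FreeNA K X ⧸ IdS S) = 0 :=
          (Submodule.Quotient.mk_eq_zero _).mpr (wrapPoly_mem_idS a b hs)
        have : (Submodule.Quotient.mk (MonoidAlgebra.single u (1 : K)) :
            FreeNA K X ⧸ IdS S) = -(Submodule.Quotient.mk r) := by
          rw [he, ← Submodule.mkQ_apply, map_sub, Submodule.mkQ_apply, Submodule.mkQ_apply,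
            hmkW, zero_sub]
        rw [this]
        refine Submodule.neg_mem _ ?_
        rw [mk_eq_sum]
        exact Submodule.sum_mem _ fun v hv =>
          Submodule.smul_mem _ _ (IH v (hrlt v hv))
  rw [eq_top_iff]
  rintro x -
  obtain ⟨p, rfl⟩ := Submodule.Quotient.mk_surjective _ x
  rw [mk_eq_sum]
  exact Submodule.sum_mem _ fun v _ => Submodule.smul_mem _ _ (claim v)

lemma cdTwo_implies_indep {S : Set (FreeNA K X)} (h2 : CDTwo S) :
    LinearIndependent K (fun w : IrrSet S =>
      (Submodule.Quotient.mk (MonoidAlgebra.single w.1 (1 : K)) : FreeNA K X ⧸ IdS S)) := by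
  rw [linearIndependent_iff']
  intro t g hsum i hi
  set F : FreeNA K X := ∑ j ∈ t, MonoidAlgebra.single j.1 (g j) with hF
  have hmkF : (Submodule.Quotient.mk F : FreeNA K X ⧸ IdS S) = 0 := by
    rw [hF, ← Submodule.mkQ_apply, map_sum, ← hsum]
    refine Finset.sum_congr rfl fun j hj => ?_
    rw [show MonoidAlgebra.single j.1 (g j) = (g j) • MonoidAlgebra.single j.1 (1 : K) by
      rw [MonoidAlgebra.smul_single', mul_one], map_smul, Submodule.mkQ_apply]
  have hFI : F ∈ IdS S := (Submodule.Quotient.mk_eq_zero _).mp hmkF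
  have hF0 : F = 0 := by
    by_contra hne
    obtain ⟨a, b, s, ws, hs, hl, hfl⟩ := h2 F hFI hne
    have hmem : wrapW a b ws ∈ F.coeff.support := hfl.1
    have : wrapW a b ws ∈ Finset.biUnion t
        (fun j => (MonoidAlgebra.single j.1 (g j) : FreeNA K X).coeff.support) := by
      have := Finsupp.support_finset_sum (s := t)
        (f := fun j => (MonoidAlgebra.single j.1 (g j)).coeff)
        (by rw [← MonoidAlgebra.coeff_sum]; exact hmem)
      exact this
    obtain ⟨j, hj, hmem'⟩ := Finset.mem_biUnion.mp this
    have : wrapW a b ws = j.1 := by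
      have := Finsupp.support_single_subset hmem'
      simpa using this
    exact j.2 ⟨a, b, s, ws, hs, hl, this.symm⟩
  have : F i.1 = g i := by
    rw [hF, MonoidAlgebra.coeff_sum, Finsupp.finset_sum_apply]
    rw [Finset.sum_eq_single i]
    · exact Finsupp.single_eq_same
    · intro j hj hne
      exact Finsupp.single_eq_of_ne (fun h => hne (Subtype.ext h.symm))
    · intro h; exact absurd hi h
  rw [hF0] at this
  simpa using this.symm

/-- Reduction: every polynomial is congruent mod `Id(S)` to one supported on `Irr(S)`. -/
lemma reduce [WellFoundedLT X] {S : Set (FreeNA K X)}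
    (hmonic : ∀ s ∈ S, ∃ w, MonicAt s w) :
    ∀ u : FreeSemigroup X, ∀ f : FreeNA K X, SuppLE f u →
      ∃ g : FreeNA K X, (↑g.coeff.support ⊆ IrrSet S) ∧ f - g ∈ IdS S ∧ SuppLE g u ∧
        (u ∈ IrrSet S → g u = f u) := by
  intro u
  induction u using (lt_wf (X := X)).induction with
  | _ u IH =>
    intro f hf
    by_cases hf0 : f = 0
    · exact ⟨0, by simp, by simp [hf0, Submodule.zero_mem], fun v hv => by simp at hv,
        fun _ => by simp [hf0]⟩
    obtain ⟨w0, hw0⟩ := exists_hasLead hf0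
    have hw0u : w0 ≤ u := hf w0 hw0.1
    rcases lt_or_eq_of_le hw0u with hlt | heq
    · obtain ⟨g, hg1, hg2, hg3, hg4⟩ := IH w0 hlt f (hasLead_iff.mp hw0).2
      refine ⟨g, hg1, hg2, fun v hv => le_trans (hg3 v hv) (le_of_lt hlt), fun _ => ?_⟩
      have hgu : g u = 0 := by
        by_contra h0
        exact absurd (hg3 u (Finsupp.mem_support_iff.mpr h0)) (not_le_of_gt hlt)
      have hfu : f u = 0 := by
        by_contra h0
        have := (hasLead_iff.mp hw0).2 u (Finsupp.mem_support_iff.mpr h0)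
        exact absurd (lt_of_le_of_lt this hlt) (lt_irrefl u)
      rw [hgu, hfu]
    · subst heq
      by_cases hirr : w0 ∈ IrrSet S
      · set f' := f - MonoidAlgebra.single w0 (f w0) with hf'
        have hlt' : SuppLT f' w0 := suppLT_sub_coeff_single hw0
        by_cases h0 : f' = 0
        · refine ⟨MonoidAlgebra.single w0 (f w0), ?_, ?_, ?_, fun _ => Finsupp.single_eq_same⟩
          · intro v hv
            have := Finsupp.support_single_subset hv
            simp only [Finset.mem_singleton] at this
            rw [this]; exact hirr
          · rw [show f - MonoidAlgebra.single w0 (f w0) = f' from rfl, h0]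
            exact Submodule.zero_mem _
          · intro v hv
            have := Finsupp.support_single_subset hv
            simp only [Finset.mem_singleton] at this
            rw [this]
        · obtain ⟨w1, hw1⟩ := exists_hasLead h0
          have hw1u : w1 < w0 := hlt' w1 hw1.1
          obtain ⟨g', hg1, hg2, hg3, hg4⟩ := IH w1 hw1u f' (hasLead_iff.mp hw1).2
          have hg'u : g' w0 = 0 := by
            by_contra hco
            exact absurd (lt_of_le_of_lt (hg3 w0 (Finsupp.mem_support_iff.mpr hco)) hw1u)
              (lt_irrefl w0)
          refine ⟨g' + MonoidAlgebra.single w0 (f w0), ?_, ?_, ?_, fun _ => ?_⟩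
          · intro v hv
            rcases Finset.mem_union.mp (Finsupp.support_add hv) with h | h
            · exact hg1 h
            · have := Finsupp.support_single_subset h
              simp only [Finset.mem_singleton] at this
              rw [this]; exact hirr
          · have : f - (g' + MonoidAlgebra.single w0 (f w0)) = f' - g' := by
              rw [hf']; abel
            rw [this]; exact hg2
          · intro v hv
            rcases Finset.mem_union.mp (Finsupp.support_add hv) with h | h
            · exact le_trans (hg3 v h) (le_of_lt hw1u)
            · have := Finsupp.support_single_subset h
              simp only [Finset.mem_singleton] at this
              rw [this]
          · rw [MonoidAlgebra.coeff_add, Finsupp.add_apply, hg'u, zero_add, MonoidAlgebra.coeff_single, Finsupp.single_eq_same]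
      · have hdec : ∃ a b s ws, s ∈ S ∧ HasLead s ws ∧ w0 = wrapW a b ws := by
          simpa [IrrSet, Set.mem_setOf_eq, not_not] using hirr
        obtain ⟨a, b, s, ws, hs, hl, hu⟩ := hdec
        have hW : HasLead (wrapPoly a b s) w0 := hu ▸ hasLead_wrapPoly a b hl
        have hWc : (wrapPoly a b s) w0 = 1 := by
          rw [hu, wrapPoly_apply_wrap]
          exact coeff_lead_eq_one hmonic hs hl
        set f' := f - (f w0) • wrapPoly a b s with hf'
        have hlt' : SuppLT f' w0 := by
          have e : f' = (f - MonoidAlgebra.single w0 (f w0)) -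
              (f w0) • (wrapPoly a b s - MonoidAlgebra.single w0 1) := by
            rw [hf', smul_sub,
              show (f w0) • (MonoidAlgebra.single w0 (1 : K)) = MonoidAlgebra.single w0 (f w0) by
                rw [MonoidAlgebra.smul_single', mul_one]]
            abel
          rw [e]
          exact suppLT_sub (suppLT_sub_coeff_single hw0)
            (suppLT_smul _ (support_lt_of_hasLead_sub_single hW hWc))
        have hWI : (f w0) • wrapPoly a b s ∈ IdS S :=
          Submodule.smul_mem _ _ (wrapPoly_mem_idS a b hs)
        by_cases h0 : f' = 0
        · refine ⟨0, by simp, ?_, fun v hv => by simp at hv, fun h => absurd h hirr⟩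
          have : f - 0 = f' + (f w0) • wrapPoly a b s := by rw [hf']; abel
          rw [this, h0, zero_add]
          exact hWI
        · obtain ⟨w1, hw1⟩ := exists_hasLead h0
          have hw1u : w1 < w0 := hlt' w1 hw1.1
          obtain ⟨g', hg1, hg2, hg3, hg4⟩ := IH w1 hw1u f' (hasLead_iff.mp hw1).2
          refine ⟨g', hg1, ?_, fun v hv => le_trans (hg3 v hv) (le_of_lt hw1u),
            fun h => absurd h hirr⟩
          have : f - g' = (f' - g') + (f w0) • wrapPoly a b s := by rw [hf']; abel
          rw [this]
          exact Submodule.add_mem _ hg2 hWI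

lemma cdThree_implies_cdTwo [WellFoundedLT X] {S : Set (FreeNA K X)}
    (hmonic : ∀ s ∈ S, ∃ w, MonicAt s w)
    (hind : LinearIndependent K (fun w : IrrSet S =>
      (Submodule.Quotient.mk (MonoidAlgebra.single w.1 (1 : K)) : FreeNA K X ⧸ IdS S))) :
    CDTwo S := by
  intro f hmem hf0
  by_contra hno
  obtain ⟨u, hu⟩ := exists_hasLead hf0
  have hirr : u ∈ IrrSet S := by
    rintro ⟨a, b, s, ws, hs, hl, he⟩
    exact hno ⟨a, b, s, ws, hs, hl, he ▸ hu⟩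
  obtain ⟨g, hg1, hg2, hg3, hg4⟩ := reduce hmonic u f (hasLead_iff.mp hu).2
  have hgI : g ∈ IdS S := by
    have := Submodule.sub_mem _ hmem hg2
    simpa using this
  have hgu : g u = f u := hg4 hirr
  have hfu : f u ≠ 0 := hasLead_coeff_ne hu
  have hmk : (Submodule.Quotient.mk g : FreeNA K X ⧸ IdS S) = 0 :=
    (Submodule.Quotient.mk_eq_zero _).mpr hgI
  rw [linearIndependent_iff'] at hind
  classical
  set emb : g.coeff.support ↪ IrrSet S :=
    ⟨fun v => ⟨v.1, hg1 v.2⟩, fun v v' h => Subtype.ext (by simpa using congrArg Subtype.val h)⟩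
    with hemb
  set t : Finset (IrrSet S) := g.coeff.support.attach.map emb with ht
  have hsum : ∑ i ∈ t, (g i.1) • (Submodule.Quotient.mk (MonoidAlgebra.single i.1 (1 : K)) :
      FreeNA K X ⧸ IdS S) = Submodule.Quotient.mk g := by
    rw [ht, Finset.sum_map]
    have hc : ∀ x ∈ g.coeff.support.attach,
        g (emb x).1 • (Submodule.Quotient.mk
          (MonoidAlgebra.single ((emb x).1 : FreeSemigroup X) (1 : K)) : FreeNA K X ⧸ IdS S) =
        g x.1 • (Submodule.Quotient.mk (MonoidAlgebra.single (x.1 : FreeSemigroup X) (1 : K)) :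
          FreeNA K X ⧸ IdS S) := fun x _ => rfl
    rw [Finset.sum_congr rfl hc]
    rw [Finset.sum_attach g.coeff.support
      (fun v => (g v) • (Submodule.Quotient.mk (MonoidAlgebra.single v (1 : K)) :
        FreeNA K X ⧸ IdS S))]
    exact (mk_eq_sum S g).symm
  have hut : (⟨u, hirr⟩ : IrrSet S) ∈ t := by
    rw [ht, Finset.mem_map]
    refine ⟨⟨u, ?_⟩, Finset.mem_attach _ _, rfl⟩
    rw [Finsupp.mem_support_iff, hgu]
    exact hfu
  have := hind t (fun i => g i.1) (by rw [hsum, hmk]) ⟨u, hirr⟩ hut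
  exact hfu (hgu.symm.trans this)

end Basis

section Overlap

lemma list_overlap {Y : Type u} {a1 u1 b1 a2 u2 b2 : List Y}
    (h : a1 ++ u1 ++ b1 = a2 ++ u2 ++ b2) (hle : a1.length ≤ a2.length) :
    (∃ c, a2 = a1 ++ u1 ++ c ∧ b1 = c ++ u2 ++ b2) ∨
    (∃ a' b', a2 = a1 ++ a' ∧ u1 = a' ++ u2 ++ b' ∧ b2 = b' ++ b1) ∨
    (∃ b', b' ≠ [] ∧ a1 = a2 ∧ u2 = u1 ++ b' ∧ b1 = b' ++ b2) ∨
    (∃ a' c b', a' ≠ [] ∧ c ≠ [] ∧ b' ≠ [] ∧ a2 = a1 ++ a' ∧ u1 = a' ++ c ∧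
      u2 = c ++ b' ∧ b1 = b' ++ b2) := by
  have htot : a1 ++ (u1 ++ b1) = a2 ++ (u2 ++ b2) := by simpa [List.append_assoc] using h
  rcases le_or_gt (a1.length + u1.length) a2.length with hA | hA
  · -- disjoint or touching
    have h1 : (a1 ++ u1) <+: a2 ++ (u2 ++ b2) :=
      ⟨b1, by rw [← htot]; simp [List.append_assoc]⟩
    have h2 : a2 <+: a2 ++ (u2 ++ b2) := ⟨u2 ++ b2, rfl⟩
    obtain ⟨c, hc⟩ := List.prefix_of_prefix_length_le h1 h2 (by simpa using hA)
    left
    refine ⟨c, by rw [← hc], ?_⟩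
    have he : (a1 ++ u1) ++ b1 = (a1 ++ u1) ++ (c ++ (u2 ++ b2)) := by
      rw [← hc] at htot
      rw [List.append_assoc a1 u1 b1, htot]
      simp [List.append_assoc]
    have := List.append_cancel_left he
    simp [this, List.append_assoc]
  · have h1 : a1 <+: a2 ++ (u2 ++ b2) := ⟨u1 ++ b1, htot⟩
    have h2 : a2 <+: a2 ++ (u2 ++ b2) := ⟨u2 ++ b2, rfl⟩
    obtain ⟨a', ha⟩ := List.prefix_of_prefix_length_le h1 h2 hle
    have hmid : u1 ++ b1 = a' ++ (u2 ++ b2) := by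
      apply List.append_cancel_left (as := a1)
      rw [htot, ← ha, List.append_assoc]
    have ha'len : a'.length < u1.length := by
      have := congrArg List.length ha
      simp only [List.length_append] at this
      omega
    obtain ⟨c', hc'⟩ : a' <+: u1 :=
      List.prefix_of_prefix_length_le ⟨u2 ++ b2, hmid.symm⟩ ⟨b1, rfl⟩ (le_of_lt ha'len)
    have hc'ne : c' ≠ [] := by
      intro h0
      rw [h0, List.append_nil] at hc'
      rw [hc'] at ha'len
      exact absurd ha'len (lt_irrefl _)
    have hmid2 : c' ++ b1 = u2 ++ b2 := by
      apply List.append_cancel_left (as := a')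
      rw [← List.append_assoc, hc', hmid]
    rcases le_or_gt u2.length c'.length with hB | hB
    · obtain ⟨b', hb'⟩ : u2 <+: c' :=
        List.prefix_of_prefix_length_le ⟨b2, hmid2.symm⟩ ⟨b1, rfl⟩ hB
      right; left
      refine ⟨a', b', ha.symm, ?_, ?_⟩
      · rw [← hc', ← hb']
        simp [List.append_assoc]
      · have : u2 ++ (b' ++ b1) = u2 ++ b2 := by
          rw [← hmid2, ← hb']
          simp [List.append_assoc]
        exact (List.append_cancel_left this).symm
    · obtain ⟨b', hb'⟩ : c' <+: u2 :=
        List.prefix_of_prefix_length_le ⟨b1, rfl⟩ ⟨b2, hmid2.symm⟩ (le_of_lt hB)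
      have hb'ne : b' ≠ [] := by
        intro h0
        rw [h0, List.append_nil] at hb'
        rw [hb'] at hB
        exact absurd hB (lt_irrefl _)
      have hb1 : b1 = b' ++ b2 := by
        have : c' ++ b1 = c' ++ (b' ++ b2) := by
          rw [hmid2, ← hb']
          simp [List.append_assoc]
        exact List.append_cancel_left this
      by_cases ha'0 : a' = []
      · right; right; left
        refine ⟨b', hb'ne, ?_, ?_, hb1⟩
        · rw [← ha, ha'0, List.append_nil]
        · rw [← hb', ← hc', ha'0, List.nil_append]
      · right; right; right
        exact ⟨a', c', b', ha'0, hc'ne, hb'ne, ha.symm, hc'.symm, hb'.symm, hb1⟩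

end Overlap

section KeyLemma

variable [LinearOrder X]

/-- `Σ_{u} p_u · (a u c) q (b)` : the "two-slot" wrapping of `q` by words of `p`. -/
noncomputable def dblWrap (a c b : List X) (p q : FreeNA K X) : FreeNA K X :=
  p.coeff.sum fun u cu => cu • wrapPoly (a ++ u.toL ++ c) b q

lemma dblWrap_sum_eq (a c b : List X) (p q : FreeNA K X) :
    dblWrap a c b p q = ∑ u ∈ p.coeff.support, (p u) • wrapPoly (a ++ u.toL ++ c) b q := rfl

lemma dblWrap_single_left (a c b : List X) (u : FreeSemigroup X) (k : K) (q : FreeNA K X) :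
    dblWrap a c b (MonoidAlgebra.single u k) q = k • wrapPoly (a ++ u.toL ++ c) b q := by
  unfold dblWrap
  exact Finsupp.sum_single_index (by simp)

lemma wrapW_cross (a c b : List X) (u v : FreeSemigroup X) :
    wrapW (a ++ u.toL ++ c) b v = wrapW a (c ++ v.toL ++ b) u := by
  apply FreeSemigroup.toL_injective
  simp [toL_wrapW]

lemma dblWrap_single_right (a c b : List X) (p : FreeNA K X) (v : FreeSemigroup X) (k : K) :
    dblWrap a c b p (MonoidAlgebra.single v k) = k • wrapPoly a (c ++ v.toL ++ b) p := by
  unfold dblWrap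
  rw [show wrapPoly a (c ++ v.toL ++ b) p =
    p.coeff.sum fun u cu => MonoidAlgebra.single (wrapW a (c ++ v.toL ++ b) u) cu from rfl,
    Finsupp.smul_sum]
  refine Finsupp.sum_congr fun u hu => ?_
  rw [wrapPoly_single, wrapW_cross]
  rw [MonoidAlgebra.smul_single', MonoidAlgebra.smul_single', mul_comm]

lemma dblWrap_zero_right (a c b : List X) (p : FreeNA K X) :
    dblWrap a c b p 0 = 0 := by
  unfold dblWrap
  simp [wrapPoly_zero]

lemma dblWrap_add_right (a c b : List X) (p q q' : FreeNA K X) :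
    dblWrap a c b p (q + q') = dblWrap a c b p q + dblWrap a c b p q' := by
  unfold dblWrap
  rw [← Finsupp.sum_add]
  refine Finsupp.sum_congr fun u hu => ?_
  rw [wrapPoly_add, smul_add]

lemma dblWrap_sub_right (a c b : List X) (p q q' : FreeNA K X) :
    dblWrap a c b p (q - q') = dblWrap a c b p q - dblWrap a c b p q' := by
  unfold dblWrap
  rw [← Finsupp.sum_sub]
  refine Finsupp.sum_congr fun u hu => ?_
  rw [wrapPoly_sub, smul_sub]

lemma dblWrap_sub_left (a c b : List X) (p p' q : FreeNA K X) :
    dblWrap a c b (p - p') q = dblWrap a c b p q - dblWrap a c b p' q := by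
  unfold dblWrap
  apply Finsupp.sum_sub_index
  intro u c1 c2
  rw [sub_smul]

/-- Expansion of `dblWrap` over the right argument. -/
lemma dblWrap_eq_sum_right (a c b : List X) (p q : FreeNA K X) :
    dblWrap a c b p q = q.coeff.sum fun v cv => cv • wrapPoly a (c ++ v.toL ++ b) p := by
  induction q using MonoidAlgebra.induction_linear with
  | zero => simp [dblWrap_zero_right]
  | add q q' hq hq' =>
    rw [dblWrap_add_right, hq, hq', MonoidAlgebra.coeff_add,
      Finsupp.sum_add_index' (by simp) (by intro v c1 c2; rw [add_smul])]
  | single v k =>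
    rw [dblWrap_single_right, MonoidAlgebra.coeff_single, Finsupp.sum_single_index (by simp)]

lemma dblWrap_sum_eq_right (a c b : List X) (p q : FreeNA K X) :
    dblWrap a c b p q = ∑ v ∈ q.coeff.support, (q v) • wrapPoly a (c ++ v.toL ++ b) p :=
  (dblWrap_eq_sum_right a c b p q).trans rfl

/-- The disjoint-case telescoping identity. -/
lemma disjoint_identity (a c b : List X) (s1 s2 : FreeNA K X) (w1 w2 : FreeSemigroup X) :
    wrapPoly a (c ++ w2.toL ++ b) s1 - wrapPoly (a ++ w1.toL ++ c) b s2 =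
      dblWrap a c b (s1 - MonoidAlgebra.single w1 1) s2 -
        dblWrap a c b s1 (s2 - MonoidAlgebra.single w2 1) := by
  rw [dblWrap_sub_left, dblWrap_sub_right, dblWrap_single_left, dblWrap_single_right,
    one_smul, one_smul]
  abel

lemma kl2_aux [WellFoundedLT X] {S : Set (FreeNA K X)} (hGSB : IsGSB S)
    {s1 s2 : FreeNA K X} {w1 w2 : FreeSemigroup X} (hs1 : s1 ∈ S) (hs2 : s2 ∈ S)
    (hw1 : HasLead s1 w1) (hw2 : HasLead s2 w2) {a1 b1 a2 b2 : List X}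
    (heq : wrapW a1 b1 w1 = wrapW a2 b2 w2) (hle : a1.length ≤ a2.length) :
    TrivialMod S (wrapW a1 b1 w1) (wrapPoly a1 b1 s1 - wrapPoly a2 b2 s2) := by
  have hmonic := hGSB.1
  have hlist : a1 ++ w1.toL ++ b1 = a2 ++ w2.toL ++ b2 := by
    have := congrArg FreeSemigroup.toL heq
    simpa [toL_wrapW] using this
  have hm1 : s1 w1 = 1 := coeff_lead_eq_one hmonic hs1 hw1
  have hm2 : s2 w2 = 1 := coeff_lead_eq_one hmonic hs2 hw2
  rcases list_overlap hlist hle with ⟨c, rfl, rfl⟩ | ⟨a', b', rfl, hu1, rfl⟩ |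
    ⟨b', hb'ne, rfl, hu2, rfl⟩ | ⟨a', c, b', ha'ne, hcne, hb'ne, rfl, hu1, hu2, rfl⟩
  · -- disjoint case
    have hb1 : wrapW a1 (c ++ w2.toL ++ b2) w1 = wrapW a1 (c ++ w2.toL ++ b2) w1 := rfl
    have hW : wrapW a1 (c ++ w2.toL ++ b2) w1 = wrapW (a1 ++ w1.toL ++ c) b2 w2 := by
      apply FreeSemigroup.toL_injective
      simp [toL_wrapW]
    rw [show wrapPoly a1 (c ++ w2.toL ++ b2) s1 - wrapPoly (a1 ++ w1.toL ++ c) b2 s2 =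
      dblWrap a1 c b2 (s1 - MonoidAlgebra.single w1 1) s2 -
        dblWrap a1 c b2 s1 (s2 - MonoidAlgebra.single w2 1) from
      disjoint_identity a1 c b2 s1 s2 w1 w2]
    refine Submodule.sub_mem _ ?_ ?_
    · rw [dblWrap_sum_eq]
      refine Submodule.sum_mem _ fun u hu => ?_
      refine Submodule.smul_mem _ _ (trivialMod_gen hs2 hw2 ?_)
      have hult : u < w1 := support_lt_of_hasLead_sub_single hw1 hm1 u hu
      rw [show wrapW (a1 ++ u.toL ++ c) b2 w2 = wrapW a1 (c ++ w2.toL ++ b2) u from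
        wrapW_cross a1 c b2 u w2]
      exact lt_wrapW_mono _ _ hult
    · rw [dblWrap_sum_eq_right]
      refine Submodule.sum_mem _ fun v hv => ?_
      refine Submodule.smul_mem _ _ (trivialMod_gen hs1 hw1 ?_)
      have hvlt : v < w2 := support_lt_of_hasLead_sub_single hw2 hm2 v hv
      rw [hW, show wrapW a1 (c ++ v.toL ++ b2) w1 = wrapW (a1 ++ w1.toL ++ c) b2 v from
        (wrapW_cross a1 c b2 w1 v).symm]
      exact lt_wrapW_mono _ _ hvlt
  · -- inclusion: w2 inside w1
    have hw1w2 : w1 = wrapW a' b' w2 := by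
      apply FreeSemigroup.toL_injective
      rw [toL_wrapW, hu1]
    have htriv := hGSB.2.2 s1 hs1 s2 hs2 w1 w2 a' b' hw1 hw2 hw1w2
    have := trivialMod_wrap a1 b1 htriv
    rw [wrapPoly_sub, wrapPoly_wrapPoly] at this
    exact this
  · -- inclusion: w1 is a prefix of w2 with a1 = a2
    have hw2w1 : w2 = wrapW [] b' w1 := by
      apply FreeSemigroup.toL_injective
      rw [toL_wrapW, hu2]
      simp
    have htriv := hGSB.2.2 s2 hs2 s1 hs1 w2 w1 [] b' hw2 hw1 hw2w1
    have := trivialMod_wrap a1 b2 htriv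
    rw [wrapPoly_sub, wrapPoly_wrapPoly] at this
    rw [heq]
    have hneg := Submodule.neg_mem _ this
    rw [neg_sub] at hneg
    rw [show a1 ++ [] = a1 from List.append_nil a1] at hneg
    exact hneg
  · -- proper overlap
    obtain ⟨ax, axs, rfl⟩ : ∃ x xs, a' = x :: xs := by
      cases a' with
      | nil => exact absurd rfl ha'ne
      | cons x xs => exact ⟨x, xs, rfl⟩
    obtain ⟨bx, bxs, rfl⟩ : ∃ x xs, b' = x :: xs := by
      cases b' with
      | nil => exact absurd rfl hb'ne
      | cons x xs => exact ⟨x, xs, rfl⟩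
    set A : FreeSemigroup X := ⟨ax, axs⟩ with hA
    set B : FreeSemigroup X := ⟨bx, bxs⟩ with hB
    have hAL : A.toL = ax :: axs := rfl
    have hBL : B.toL = bx :: bxs := rfl
    have hcross : w1 * B = A * w2 := by
      apply FreeSemigroup.toL_injective
      rw [FreeSemigroup.toL_mul, FreeSemigroup.toL_mul, hAL, hBL, hu1, hu2]
      simp [List.append_assoc]
    have hlen : (w1 * B).len < w1.len + w2.len := by
      have h1 : (w1 * B).len = w1.len + B.len := by
        simp [FreeSemigroup.len, FreeSemigroup.toL_mul]
      have h2 : w2.len = c.length + B.len := by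
        simp [FreeSemigroup.len, hu2, hBL]
      have hc : 0 < c.length := List.length_pos_iff.mpr hcne
      omega
    have htriv := hGSB.2.1 s1 hs1 s2 hs2 w1 w2 B A hw1 hw2 hcross hlen
    rw [mul_single_eq_wrapPoly, single_mul_eq_wrapPoly] at htriv
    have hwrap := trivialMod_wrap a1 b2 htriv
    rw [wrapPoly_sub, wrapPoly_wrapPoly, wrapPoly_wrapPoly] at hwrap
    have hword : wrapW a1 b2 (w1 * B) = wrapW a1 ((bx :: bxs) ++ b2) w1 := by
      apply FreeSemigroup.toL_injective
      rw [toL_wrapW, toL_wrapW, FreeSemigroup.toL_mul, hBL]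
      simp [List.append_assoc]
    rw [hword] at hwrap
    rw [show a1 ++ [] = a1 from List.append_nil a1, hAL, hBL] at hwrap
    simpa using hwrap

lemma kl2 [WellFoundedLT X] {S : Set (FreeNA K X)} (hGSB : IsGSB S)
    {s1 s2 : FreeNA K X} {w1 w2 : FreeSemigroup X} (hs1 : s1 ∈ S) (hs2 : s2 ∈ S)
    (hw1 : HasLead s1 w1) (hw2 : HasLead s2 w2) {a1 b1 a2 b2 : List X}
    (heq : wrapW a1 b1 w1 = wrapW a2 b2 w2) :
    TrivialMod S (wrapW a1 b1 w1) (wrapPoly a1 b1 s1 - wrapPoly a2 b2 s2) := by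
  rcases le_total a1.length a2.length with hle | hle
  · exact kl2_aux hGSB hs1 hs2 hw1 hw2 heq hle
  · have := kl2_aux hGSB hs2 hs1 hw2 hw1 heq.symm hle
    rw [← heq] at this
    have hneg := Submodule.neg_mem _ this
    rw [neg_sub] at hneg
    exact hneg

end KeyLemma

section MainInduction

open scoped Classical

variable [LinearOrder X]

/-- An entry `(c, a, b, s, ws)` representing the summand `c • (a s b)`. -/
structure RepEntry (K : Type w) (X : Type u) [CommRing K] where
  c : K
  a : List X
  b : List X
  s : FreeNA K X
  ws : FreeSemigroup X

noncomputable def RepEntry.val (t : RepEntry K X) : FreeNA K X := t.c • wrapPoly t.a t.b t.s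

def RepEntry.w (t : RepEntry K X) : FreeSemigroup X := wrapW t.a t.b t.ws

def RepEntry.Good (S : Set (FreeNA K X)) (t : RepEntry K X) : Prop :=
  t.s ∈ S ∧ HasLead t.s t.ws

noncomputable def repVal (l : List (RepEntry K X)) : FreeNA K X := (l.map RepEntry.val).sum

@[simp] lemma repVal_nil : repVal ([] : List (RepEntry K X)) = 0 := rfl

@[simp] lemma repVal_cons (t : RepEntry K X) (l : List (RepEntry K X)) :
    repVal (t :: l) = t.val + repVal l := by simp [repVal]

lemma repVal_append (l1 l2 : List (RepEntry K X)) :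
    repVal (l1 ++ l2) = repVal l1 + repVal l2 := by simp [repVal]

lemma suppLE_val {t : RepEntry K X} (hg : HasLead t.s t.ws) : SuppLE t.val t.w := by
  intro v hv
  have hv' : v ∈ (wrapPoly t.a t.b t.s).coeff.support := Finsupp.support_smul hv
  obtain ⟨u, hu, rfl⟩ := mem_support_wrapPoly hv'
  exact le_wrapW_mono _ _ ((hasLead_iff.mp hg).2 u hu)

lemma suppLT_repVal {l : List (RepEntry K X)} {u : FreeSemigroup X}
    (hg : ∀ t ∈ l, HasLead t.s t.ws) (hlt : ∀ t ∈ l, t.w < u) :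
    SuppLT (repVal l) u := by
  induction l with
  | nil => exact suppLT_zero
  | cons t rest ih =>
    rw [repVal_cons]
    refine suppLT_add (fun v hv => ?_)
      (ih (fun t' ht' => hg t' (List.mem_cons_of_mem _ ht'))
        (fun t' ht' => hlt t' (List.mem_cons_of_mem _ ht')))
    exact lt_of_le_of_lt (suppLE_val (hg t (List.mem_cons_self)) v hv)
      (hlt t (List.mem_cons_self))

lemma hasLead_smul {f : FreeNA K X} {w0 : FreeSemigroup X} (h : HasLead f w0)
    (hc1 : f w0 = 1) {cc : K} (hcc : cc ≠ 0) : HasLead (cc • f) w0 := by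
  rw [hasLead_iff] at h ⊢
  constructor
  · rw [Finsupp.mem_support_iff, MonoidAlgebra.coeff_smul, Finsupp.smul_apply, hc1, smul_eq_mul, mul_one]
    exact hcc
  · intro v hv
    exact h.2 v (Finsupp.support_smul hv)

lemma exists_list_max {α : Type*} [LinearOrder α] (x : α) (l : List α) :
    ∃ m, (m = x ∨ m ∈ l) ∧ x ≤ m ∧ ∀ y ∈ l, y ≤ m := by
  induction l generalizing x with
  | nil => exact ⟨x, Or.inl rfl, le_rfl, by simp⟩
  | cons y ys ih =>
    obtain ⟨m, hm, hxm, hall⟩ := ih (max x y)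
    refine ⟨m, ?_, le_trans (le_max_left _ _) hxm, ?_⟩
    · rcases hm with h | h
      · rcases max_choice x y with h' | h'
        · exact Or.inl (h.trans h')
        · exact Or.inr (by rw [h, h']; exact List.mem_cons_self)
      · exact Or.inr (List.mem_cons_of_mem _ h)
    · intro z hz
      rcases List.mem_cons.mp hz with rfl | hz'
      · exact le_trans (le_max_right _ _) hxm
      · exact hall z hz'

lemma exists_rep_of_trivialMod {S : Set (FreeNA K X)} {w : FreeSemigroup X} {p : FreeNA K X}
    (h : TrivialMod S w p) :
    ∃ l : List (RepEntry K X), (∀ t ∈ l, RepEntry.Good S t) ∧ (∀ t ∈ l, t.w < w) ∧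
      repVal l = p := by
  obtain ⟨n, f, g, hfg⟩ := Submodule.mem_span_set'.mp h
  choose A B Sf Wf hS hL hlt hq using fun i => (g i).2
  refine ⟨List.ofFn (fun i => ⟨f i, A i, B i, Sf i, Wf i⟩), ?_, ?_, ?_⟩
  · intro t ht
    obtain ⟨i, rfl⟩ := Set.mem_range.mp (List.mem_ofFn.mp ht)
    exact ⟨hS i, hL i⟩
  · intro t ht
    obtain ⟨i, rfl⟩ := Set.mem_range.mp (List.mem_ofFn.mp ht)
    exact (degLex_iff_lt _ _).mp (hlt i)
  · rw [repVal, List.map_ofFn, List.sum_ofFn, ← hfg]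
    refine Finset.sum_congr rfl fun i _ => ?_
    rw [Function.comp_apply, RepEntry.val]
    congr 1
    exact (hq i).symm

lemma exists_rep_of_idS {S : Set (FreeNA K X)} {f : FreeNA K X}
    (hmonic : ∀ s ∈ S, ∃ w, MonicAt s w) (h : f ∈ IdS S) :
    ∃ l : List (RepEntry K X), (∀ t ∈ l, RepEntry.Good S t) ∧ repVal l = f := by
  obtain ⟨n, cf, g, hfg⟩ := Submodule.mem_span_set'.mp h
  choose A B Sf hS hq using fun i => (g i).2
  refine ⟨List.ofFn (fun i => ⟨cf i, A i, B i, Sf i,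
    Exists.choose (hmonic (Sf i) (hS i))⟩), ?_, ?_⟩
  · intro t ht
    obtain ⟨i, rfl⟩ := Set.mem_range.mp (List.mem_ofFn.mp ht)
    exact ⟨hS i, (Exists.choose_spec (hmonic (Sf i) (hS i))).1⟩
  · rw [repVal, List.map_ofFn, List.sum_ofFn, ← hfg]
    refine Finset.sum_congr rfl fun i _ => ?_
    rw [Function.comp_apply, RepEntry.val]
    congr 1
    exact (hq i).symm

lemma main_rep [WellFoundedLT X] {S : Set (FreeNA K X)} (hGSB : IsGSB S) :
    ∀ w : FreeSemigroup X, ∀ n : ℕ, ∀ l : List (RepEntry K X),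
      (∀ t ∈ l, RepEntry.Good S t) → (∀ t ∈ l, t.w ≤ w) →
      (l.filter (fun t => t.w = w)).length ≤ n → repVal l ≠ 0 →
      ∃ a b s ws, s ∈ S ∧ HasLead s ws ∧ HasLead (repVal l) (wrapW a b ws) := by
  intro w
  induction w using (lt_wf (X := X)).induction with
  | _ w IHw =>
    intro n
    induction n with
    | zero =>
      intro l hgood hle hcount hval
      have hstrict : ∀ t ∈ l, t.w < w := by
        intro t ht
        rcases lt_or_eq_of_le (hle t ht) with h | h
        · exact h
        · exfalso
          have hmemf : t ∈ l.filter (fun t => t.w = w) :=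
            List.mem_filter.mpr ⟨ht, by simp [h]⟩
          have := List.length_pos_iff.mpr (List.ne_nil_of_mem hmemf)
          omega
      cases l with
      | nil => simp at hval
      | cons t0 rest =>
        obtain ⟨m, hmmem, hxm, hall⟩ := exists_list_max (t0.w) (rest.map RepEntry.w)
        have hmlt : m < w := by
          rcases hmmem with rfl | hmem
          · exact hstrict t0 (List.mem_cons_self)
          · obtain ⟨t, ht, rfl⟩ := List.mem_map.mp hmem
            exact hstrict t (List.mem_cons_of_mem _ ht)
        refine IHw m hmlt (t0 :: rest).length (t0 :: rest) hgood ?_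
          (List.length_filter_le _ _) hval
        intro t ht
        rcases List.mem_cons.mp ht with rfl | ht'
        · exact hxm
        · exact hall _ (List.mem_map_of_mem ht')
    | succ n IHn =>
      intro l hgood hle hcount hval
      by_cases hc : (l.filter (fun t => t.w = w)).length ≤ n
      · exact IHn l hgood hle hc hval
      push_neg at hc
      have hcnt : (l.filter (fun t => t.w = w)).length = n + 1 := le_antisymm hcount hc
      have hfne : l.filter (fun t => t.w = w) ≠ [] := by
        intro h0; rw [h0] at hcnt; simp at hcnt
      obtain ⟨tstar, htstar⟩ := List.exists_mem_of_ne_nil _ hfne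
      have htsl : tstar ∈ l ∧ tstar.w = w := by
        have := List.mem_filter.mp htstar
        exact ⟨this.1, by simpa using this.2⟩
      obtain ⟨hsS, hsL⟩ := hgood tstar htsl.1
      obtain ⟨l1, l2, rfl⟩ := List.append_of_mem htsl.1
      have hmem12 : ∀ t ∈ l1 ++ l2, t ∈ l1 ++ tstar :: l2 := by
        intro t ht
        rcases List.mem_append.mp ht with h | h
        · exact List.mem_append.mpr (Or.inl h)
        · exact List.mem_append.mpr (Or.inr (List.mem_cons_of_mem _ h))
      have hcount12 : ((l1 ++ l2).filter (fun t => t.w = w)).length = n := by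
        rw [List.filter_append] at hcnt ⊢
        rw [List.filter_cons] at hcnt
        simp [htsl.2] at hcnt
        simp only [List.length_append]
        omega
      have hval_split : repVal (l1 ++ tstar :: l2) = tstar.val + repVal (l1 ++ l2) := by
        rw [repVal_append, repVal_cons, repVal_append]; abel
      rcases Nat.eq_zero_or_pos n with rfl | hn
      · -- the unique maximal entry
        have hstrict12 : ∀ t ∈ l1 ++ l2, t.w < w := by
          intro t ht
          rcases lt_or_eq_of_le (hle t (hmem12 t ht)) with h | h
          · exact h
          · exfalso
            have hmemf : t ∈ (l1 ++ l2).filter (fun t => t.w = w) :=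
              List.mem_filter.mpr ⟨ht, by simp [h]⟩
            have := List.length_pos_iff.mpr (List.ne_nil_of_mem hmemf)
            omega
        have hsuppLT : SuppLT (repVal (l1 ++ l2)) w :=
          suppLT_repVal (fun t ht => (hgood t (hmem12 t ht)).2) hstrict12
        by_cases hc0 : tstar.c = 0
        · have hvz : tstar.val = 0 := by rw [RepEntry.val, hc0, zero_smul]
          have hve : repVal (l1 ++ tstar :: l2) = repVal (l1 ++ l2) := by
            rw [hval_split, hvz, zero_add]
          rw [hve] at hval ⊢
          refine IHn (l1 ++ l2) (fun t ht => hgood t (hmem12 t ht))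
            (fun t ht => hle t (hmem12 t ht)) ?_ hval
          rw [hcount12]
        · have hWlead : HasLead (wrapPoly tstar.a tstar.b tstar.s) tstar.w :=
            hasLead_wrapPoly _ _ hsL
          have hWc : (wrapPoly tstar.a tstar.b tstar.s) tstar.w = 1 := by
            rw [RepEntry.w, wrapPoly_apply_wrap]
            exact coeff_lead_eq_one hGSB.1 hsS hsL
          have hlead : HasLead tstar.val tstar.w := hasLead_smul hWlead hWc hc0
          refine ⟨tstar.a, tstar.b, tstar.s, tstar.ws, hsS, hsL, ?_⟩
          rw [hval_split]
          have hsupp' : SuppLT (repVal (l1 ++ l2)) (wrapW tstar.a tstar.b tstar.ws) := by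
            rw [show wrapW tstar.a tstar.b tstar.ws = tstar.w from rfl, htsl.2]
            exact hsuppLT
          exact hasLead_of_suppLT hlead hsupp'
      · -- merge two maximal entries
        have hfne2 : (l1 ++ l2).filter (fun t => t.w = w) ≠ [] := by
          intro h0
          rw [h0] at hcount12
          simp at hcount12
          omega
        obtain ⟨tp, htp⟩ := List.exists_mem_of_ne_nil _ hfne2
        have htpl : tp ∈ l1 ++ l2 ∧ tp.w = w := by
          have := List.mem_filter.mp htp
          exact ⟨this.1, by simpa using this.2⟩
        obtain ⟨hpS, hpL⟩ := hgood tp (hmem12 tp htpl.1)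
        obtain ⟨m1, m2, hm⟩ := List.append_of_mem htpl.1
        have heqw : wrapW tstar.a tstar.b tstar.ws = wrapW tp.a tp.b tp.ws := by
          rw [show wrapW tstar.a tstar.b tstar.ws = tstar.w from rfl,
            show wrapW tp.a tp.b tp.ws = tp.w from rfl, htsl.2, htpl.2]
        have hD : TrivialMod S w
            (wrapPoly tstar.a tstar.b tstar.s - wrapPoly tp.a tp.b tp.s) := by
          have := kl2 hGSB hsS hpS hsL hpL heqw
          rwa [show wrapW tstar.a tstar.b tstar.ws = w from htsl.2] at this
        have hDs : TrivialMod S w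
            (tstar.c • (wrapPoly tstar.a tstar.b tstar.s - wrapPoly tp.a tp.b tp.s)) :=
          Submodule.smul_mem _ _ hD
        obtain ⟨ld, hldgood, hldlt, hldval⟩ := exists_rep_of_trivialMod hDs
        set tnew : RepEntry K X := ⟨tp.c + tstar.c, tp.a, tp.b, tp.s, tp.ws⟩ with htnew
        set l' := tnew :: (m1 ++ m2) ++ ld with hl'
        have hval' : repVal l' = repVal (l1 ++ tstar :: l2) := by
          simp only [hl', hval_split, hm, repVal_append, repVal_cons, hldval, htnew,
            RepEntry.val, add_smul, smul_sub]
          abel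
        have hgood' : ∀ t ∈ l', RepEntry.Good S t := by
          intro t ht
          rcases List.mem_append.mp ht with h | h
          · rcases List.mem_cons.mp h with rfl | h'
            · exact ⟨hpS, hpL⟩
            · refine hgood t (hmem12 t ?_)
              rw [hm]
              rcases List.mem_append.mp h' with h'' | h''
              · exact List.mem_append.mpr (Or.inl h'')
              · exact List.mem_append.mpr (Or.inr (List.mem_cons_of_mem _ h''))
          · exact hldgood t h
        have hle' : ∀ t ∈ l', t.w ≤ w := by
          intro t ht
          rcases List.mem_append.mp ht with h | h
          · rcases List.mem_cons.mp h with rfl | h'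
            · rw [show tnew.w = tp.w from rfl, htpl.2]
            · refine hle t (hmem12 t ?_)
              rw [hm]
              rcases List.mem_append.mp h' with h'' | h''
              · exact List.mem_append.mpr (Or.inl h'')
              · exact List.mem_append.mpr (Or.inr (List.mem_cons_of_mem _ h''))
          · exact le_of_lt (hldlt t h)
        have hcount' : (l'.filter (fun t => t.w = w)).length ≤ n := by
          have hcm : ((m1 ++ m2).filter (fun t => t.w = w)).length = n - 1 := by
            rw [hm, List.filter_append, List.filter_cons] at hcount12
            simp [htpl.2] at hcount12
            rw [List.filter_append]
            simp only [List.length_append]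
            omega
          have hcld : (ld.filter (fun t => t.w = w)).length = 0 := by
            rw [List.length_eq_zero_iff]
            rw [List.filter_eq_nil_iff]
            intro t ht
            simp only [decide_eq_true_eq]
            exact ne_of_lt (hldlt t ht)
          rw [hl', List.filter_append, List.filter_cons,
            show tnew.w = tp.w from rfl, htpl.2]
          simp only [decide_true, if_true, List.length_append, List.length_cons, hcld]
          omega
        have hval0' : repVal l' ≠ 0 := by rw [hval']; exact hval
        obtain ⟨a, b, s, ws, h1, h2, h3⟩ := IHn l' hgood' hle' hcount' hval0'
        rw [hval'] at h3
        exact ⟨a, b, s, ws, h1, h2, h3⟩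

lemma isGSB_implies_cdTwo [WellFoundedLT X] {S : Set (FreeNA K X)} (hGSB : IsGSB S) :
    CDTwo S := by
  intro f hmem hf0
  obtain ⟨l, hgood, hval⟩ := exists_rep_of_idS hGSB.1 hmem
  subst hval
  cases l with
  | nil => simp at hf0
  | cons t0 rest =>
    obtain ⟨m, hmmem, hxm, hall⟩ := exists_list_max (t0.w) (rest.map RepEntry.w)
    refine main_rep hGSB m (t0 :: rest).length (t0 :: rest) hgood ?_
      (List.length_filter_le _ _) hf0
    intro t ht
    rcases List.mem_cons.mp ht with rfl | ht'
    · exact hxm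
    · exact hall _ (List.mem_map_of_mem ht')

end MainInduction

/-- **Composition–Diamond lemma for associative algebras** (the case `Ω = ∅`; Shirshov,
Bokut, Bergman).  Let `K` be a commutative ring with unit, `X` a well-ordered set, and
order `S(X)` by the deg-lex ordering.  For a set `S` of monic polynomials of `K⟨X⟩`
the following are equivalent: (I) `S` is a Gröbner–Shirshov basis; (II) the leading
word of every nonzero element of `Id(S)` contains some `s̄`, `s ∈ S`, as a subword;
(III) `Irr(S)` is a `K`-basis of `K⟨X⟩/Id(S)`. -/
theorem composition_diamond_assoc [WellFoundedLT X]
    (S : Set (FreeNA K X)) (hmonic : ∀ s ∈ S, ∃ w, MonicAt s w) :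
    (IsGSB S ↔ CDTwo S) ∧ (IsGSB S ↔ CDThree S) := by
  have h12 : IsGSB S → CDTwo S := fun h1 => isGSB_implies_cdTwo h1
  have h21 : CDTwo S → IsGSB S := fun h2 => cdTwo_implies_isGSB hmonic h2
  have h23 : CDTwo S → CDThree S := fun h2 =>
    ⟨cdTwo_implies_indep h2, span_irr_eq_top hmonic⟩
  have h32 : CDThree S → CDTwo S := fun h3 => cdThree_implies_cdTwo hmonic h3.1
  exact ⟨⟨h12, h21⟩, ⟨fun h1 => h23 (h12 h1), fun h3 => h21 (h32 h3)⟩⟩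

end Algebra
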